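/- Substituting q = 1 into the inversion enumerator polynomial Q_n(x,q) = Σ_{w ∈ RC_n} x^{|w|_1} q^{inv(w)} yields Σ_{k=0}^{⌊n/2⌋} C(n-1-k, k) x^k for n ≥ 2; that is, the number of run-constrained binary strings of length n with exactly k ones equals C(n-1-k, k). -/

import Mathlib

/-- Run-constrained binary strings (bits encoded as `1 = true`, `0 = false`):
the strings in which every maximal run of 1s is immediately followed by a
strictly longer run of 0s; equivalently (as stated in the paper), the
concatenations of zero or more words from the infinite alphabet
`R = {0} ∪ {1^i 0^{i+1} : i ≥ 1}`. -/
inductive RunConstrained : List Bool → Prop where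
  | nil : RunConstrained []
  | zero {w : List Bool} : RunConstrained w → RunConstrained (false :: w)
  | block {w : List Bool} (i : ℕ) (hi : 1 ≤ i) : RunConstrained w →
      RunConstrained (List.replicate i true ++ List.replicate (i + 1) false ++ w)

/-- Vertices of the Fibonacci-run graph `R_n`: binary strings `w` of length `n`
such that `w00` is a run-constrained string of length `n+2`. -/
def RunVertex (n : ℕ) :=
  {w : Fin n → Bool // RunConstrained (List.ofFn w ++ [false, false])}

/-- The Fibonacci-run graph `R_n`: two vertices are adjacent iff their
Hamming distance is 1. -/
def runGraph (n : ℕ) : SimpleGraph (RunVertex n) where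
  Adj u v := hammingDist u.1 v.1 = 1
  symm := ⟨fun u v h => (hammingDist_comm v.1 u.1).trans h⟩
  loopless := ⟨fun u h => by simp [hammingDist_self] at h⟩

attribute [local instance] Classical.propDecidable

/-- The set of run-constrained binary strings of length `n`. -/
def RC (n : ℕ) := {w : Fin n → Bool // RunConstrained (List.ofFn w)}

noncomputable instance (n : ℕ) : Fintype (RC n) := Subtype.fintype _

/-- The number of inversions of a binary string `w`: pairs `i < j` with
`w_i = 1` and `w_j = 0`. -/
def inv {n : ℕ} (w : Fin n → Bool) : ℕ :=
  (Finset.univ.filter fun p : Fin n × Fin n =>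
    p.1 < p.2 ∧ w p.1 = true ∧ w p.2 = false).card

open MvPolynomial in
/-- The inversion enumerator polynomial
`Q_n(x,q) = Σ_{w ∈ RC_n} x^{|w|₁} q^{inv(w)}`, with `x = X 0`, `q = X 1`. -/
noncomputable def Q (n : ℕ) : MvPolynomial (Fin 2) ℤ :=
  ∑ w : RC n, X 0 ^ (List.ofFn w.1).count true * X 1 ^ inv w.1

namespace QAux

lemma rc_false_inv {l : List Bool} (h : RunConstrained l) :
    ∀ w, l = false :: w → RunConstrained w := by
  cases h with
  | nil => intro w hw; cases hw
  | zero h => intro w hw; cases hw; exact h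
  | block i hi h =>
    intro w hw
    exfalso
    rcases Nat.exists_eq_add_of_le hi with ⟨j, hj⟩
    subst hj
    rw [Nat.add_comm] at hw
    simp [List.replicate_succ] at hw

lemma rc_false_iff {w : List Bool} : RunConstrained (false :: w) ↔ RunConstrained w :=
  ⟨fun h => rc_false_inv h w rfl, .zero⟩

lemma count_true_block (i j : ℕ) (u : List Bool) :
    (List.replicate i true ++ List.replicate j false ++ u).count true = i + u.count true := by
  simp [List.count_append, List.count_replicate]

lemma length_block (i j : ℕ) (u : List Bool) :
    (List.replicate i true ++ List.replicate j false ++ u).length = i + j + u.length := by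
  simp
  omega

lemma rc_count_lt {w : List Bool} (h : RunConstrained w) :
    2 * w.count true < w.length ∨ w.count true = 0 := by
  induction h with
  | nil => right; rfl
  | zero h ih =>
    rcases ih with h2 | h2
    · left; simpa using Nat.lt_succ_of_lt h2
    · right; simpa using h2
  | block i hi h ih =>
    left
    rw [count_true_block, length_block]
    rcases ih with h2 | h2 <;> omega

lemma decomp_true {l : List Bool} (h : RunConstrained l) (hh : l.headI = true) :
    ∃ i u, 1 ≤ i ∧ RunConstrained u ∧
      l = List.replicate i true ++ List.replicate (i + 1) false ++ u := by
  cases h with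
  | nil => simp at hh
  | zero h => simp at hh
  | block i hi h => exact ⟨i, _, hi, h, rfl⟩

lemma decomp {l : List Bool} (h : RunConstrained l) :
    l = [] ∨ (∃ u, RunConstrained u ∧ l = false :: u) ∨
      ∃ i u, 1 ≤ i ∧ RunConstrained u ∧
        l = List.replicate i true ++ List.replicate (i + 1) false ++ u := by
  cases h with
  | nil => left; rfl
  | zero h => right; left; exact ⟨_, h, rfl⟩
  | block i hi h => right; right; exact ⟨i, _, hi, h, rfl⟩

lemma takeWhile_block (a : ℕ) (r : List Bool) :
    (List.replicate a true ++ false :: r).takeWhile (fun b => b) = List.replicate a true := by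
  induction a with
  | zero => simp
  | succ a ih => simp [List.replicate_succ, ih]

lemma dropWhile_block (a : ℕ) (r : List Bool) :
    (List.replicate a true ++ false :: r).dropWhile (fun b => b) = false :: r := by
  induction a with
  | zero => simp
  | succ a ih => simp [List.replicate_succ, ih]

lemma erase_block (a b : ℕ) (u : List Bool) :
    (List.replicate a true ++ List.replicate (b + 1) false ++ u).erase false
      = List.replicate a true ++ List.replicate b false ++ u := by
  rw [List.append_assoc, List.erase_append_right _ (by simp), List.replicate_succ,
    List.cons_append, List.erase_cons_head, List.append_assoc]


lemma rc_replicate_false (n : ℕ) : RunConstrained (List.replicate n false) := by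
  induction n with
  | zero => exact .nil
  | succ n ih => rw [List.replicate_succ]; exact .zero ih

def tupEquiv (n : ℕ) (P : List Bool → Prop) :
    {w : Fin n → Bool // P (List.ofFn w)} ≃ {l : List Bool // l.length = n ∧ P l} where
  toFun w := ⟨List.ofFn w.1, by simp, w.2⟩
  invFun l := ⟨fun i => l.1.get (Fin.cast l.2.1.symm i), by
    have h : List.ofFn (fun i => l.1.get (Fin.cast l.2.1.symm i)) = l.1 := by
      rcases l with ⟨l, hl, hP⟩
      subst hl
      simp [Fin.cast_refl, List.ofFn_get]
    rw [h]
    exact l.2.2⟩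
  left_inv w := by
    ext i
    simp
  right_inv l := by
    apply Subtype.ext
    rcases l with ⟨l, hl, hP⟩
    subst hl
    simp [Fin.cast_refl, List.ofFn_get]

noncomputable def cnt (n k : ℕ) : ℕ :=
  Nat.card {l : List Bool // l.length = n ∧ (RunConstrained l ∧ l.count true = k)}

instance cntFinite (n : ℕ) (P : List Bool → Prop) :
    Finite {l : List Bool // l.length = n ∧ P l} :=
  Finite.of_equiv _ (tupEquiv n P)

lemma cnt_zero (n : ℕ) : cnt n 0 = 1 := by
  have hu : Unique {l : List Bool // l.length = n ∧ (RunConstrained l ∧ l.count true = 0)} := by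
    refine ⟨⟨⟨List.replicate n false, by simp, rc_replicate_false n, by simp [List.count_replicate]⟩⟩, ?_⟩
    rintro ⟨l, hl, _, hc⟩
    apply Subtype.ext
    show l = List.replicate n false
    apply List.eq_replicate_iff.2
    refine ⟨hl, fun b hb => ?_⟩
    cases b
    · rfl
    · exact absurd hb (List.count_eq_zero.1 hc)
  rw [cnt, Nat.card_unique]

lemma cnt_small (n k : ℕ) (hk : 1 ≤ k) (hn : n ≤ 2 * k) : cnt n k = 0 := by
  have : IsEmpty {l : List Bool // l.length = n ∧ (RunConstrained l ∧ l.count true = k)} := by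
    constructor
    rintro ⟨l, hl, hrc, hc⟩
    rcases rc_count_lt hrc with h | h <;> omega
  rw [cnt, Nat.card_of_isEmpty]

lemma tail_erase_block (i : ℕ) (u : List Bool) :
    ((List.replicate (i + 1) true ++ List.replicate (i + 1 + 1) false ++ u).tail).erase false
      = List.replicate i true ++ List.replicate (i + 1) false ++ u := by
  rw [List.replicate_succ, List.cons_append, List.cons_append, List.tail_cons]
  exact erase_block i (i + 1) u

lemma H_block (r : ℕ) (u : List Bool) :
    true :: ((List.replicate r true ++ List.replicate (r + 1) false ++ u).takeWhile (fun b => b)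
      ++ false :: (List.replicate r true ++ List.replicate (r + 1) false ++ u).dropWhile
        (fun b => b))
      = List.replicate (r + 1) true ++ List.replicate (r + 1 + 1) false ++ u := by
  have h : List.replicate r true ++ List.replicate (r + 1) false ++ u
      = List.replicate r true ++ false :: (List.replicate r false ++ u) := by
    simp [List.replicate_succ]
  rw [h, takeWhile_block, dropWhile_block]
  simp [List.replicate_succ, List.replicate_succ']

lemma decomp_true' {l : List Bool} (h : RunConstrained l) (hh : l.headI = true) :
    ∃ i u, RunConstrained u ∧
      l = List.replicate (i + 1) true ++ List.replicate (i + 1 + 1) false ++ u := by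
  obtain ⟨i, u, hi, hu, rfl⟩ := decomp_true h hh
  obtain ⟨i, rfl⟩ : ∃ i', i = i' + 1 := ⟨i - 1, by omega⟩
  exact ⟨i, u, hu, rfl⟩

lemma decomp' {l : List Bool} (h : RunConstrained l) (hne : l ≠ []) :
    ∃ r u, RunConstrained u ∧
      l = List.replicate r true ++ List.replicate (r + 1) false ++ u := by
  rcases decomp h with rfl | ⟨u, hu, rfl⟩ | ⟨i, u, hi, hu, rfl⟩
  · exact absurd rfl hne
  · exact ⟨0, u, hu, by simp⟩
  · exact ⟨i, u, hu, rfl⟩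

lemma cnt_rec (m j : ℕ) :
    cnt (m + 3) (j + 1) = cnt (m + 2) (j + 1) + cnt (m + 1) j := by
  classical
  set S := {l : List Bool // l.length = m + 3 ∧ (RunConstrained l ∧ l.count true = j + 1)}
    with hS
  have hcard : Nat.card S
      = Nat.card {x : S // x.1.headI = false} + Nat.card {x : S // ¬ x.1.headI = false} := by
    rw [← Nat.card_sum]
    exact (Nat.card_congr (Equiv.sumCompl _)).symm
  have eA : {x : S // x.1.headI = false}
      ≃ {l : List Bool // l.length = m + 2 ∧ (RunConstrained l ∧ l.count true = j + 1)} := by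
    refine ⟨fun x => ⟨x.1.1.tail, ?_⟩,
      fun y => ⟨⟨false :: y.1, by simp [y.2.1], .zero y.2.2.1, by simp [y.2.2.2]⟩, rfl⟩,
      ?_, ?_⟩
    · obtain ⟨⟨l, hlen, hrc, hcnt⟩, hh⟩ := x
      rcases l with _ | ⟨b, t⟩
      · simp at hlen
      · simp only [List.headI] at hh
        subst hh
        refine ⟨by simpa using hlen, rc_false_inv hrc t rfl, by simpa using hcnt⟩
    · rintro ⟨⟨l, hlen, hrc, hcnt⟩, hh⟩
      rcases l with _ | ⟨b, t⟩
      · simp at hlen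
      · simp only [List.headI] at hh
        subst hh
        rfl
    · rintro ⟨y, hy⟩
      rfl
  have eB : {x : S // ¬ x.1.headI = false}
      ≃ {l : List Bool // l.length = m + 1 ∧ (RunConstrained l ∧ l.count true = j)} := by
    refine ⟨fun x => ⟨x.1.1.tail.erase false, ?_⟩,
      fun y => ⟨⟨true :: (y.1.takeWhile (fun b => b) ++ false :: y.1.dropWhile (fun b => b)),
        ?_⟩, by simp⟩, ?_, ?_⟩
    · obtain ⟨⟨l, hlen, hrc, hcnt⟩, hh⟩ := x
      have hh' : l.headI = true := by simpa using hh
      obtain ⟨i, u, hu, rfl⟩ := decomp_true' hrc hh'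
      rw [length_block] at hlen
      rw [count_true_block] at hcnt
      rw [tail_erase_block]
      refine ⟨by rw [length_block]; omega, ?_, by rw [count_true_block]; omega⟩
      rcases Nat.eq_zero_or_pos i with rfl | hipos
      · simpa using RunConstrained.zero hu
      · exact RunConstrained.block i hipos hu
    · obtain ⟨y, hlen, hrc, hcnt⟩ := y
      have hne : y ≠ [] := by intro h; rw [h] at hlen; simp at hlen
      obtain ⟨r, u, hu, rfl⟩ := decomp' hrc hne
      rw [length_block] at hlen
      rw [count_true_block] at hcnt
      rw [H_block]
      exact ⟨by rw [length_block]; omega, RunConstrained.block (r + 1) (by omega) hu,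
        by rw [count_true_block]; omega⟩
    · rintro ⟨⟨l, hlen, hrc, hcnt⟩, hh⟩
      have hh' : l.headI = true := by simpa using hh
      obtain ⟨i, u, hu, rfl⟩ := decomp_true' hrc hh'
      apply Subtype.ext
      apply Subtype.ext
      dsimp only
      rw [tail_erase_block]
      exact H_block i u
    · rintro ⟨y, hlen, hrc, hcnt⟩
      apply Subtype.ext
      show (true :: (y.takeWhile (fun b => b) ++ false :: y.dropWhile (fun b => b))).tail.erase
        false = y
      rw [List.tail_cons, List.erase_append_right _ ?_, List.erase_cons_head,
        List.takeWhile_append_dropWhile]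
      intro hmem
      have := List.mem_takeWhile_imp hmem
      simp at this
  rw [cnt, cnt, cnt, hcard, Nat.card_congr eA, Nat.card_congr eB]

lemma cnt_formula : ∀ n k, cnt n k = (n - 1 - k).choose k := by
  intro n
  induction n using Nat.strong_induction_on with
  | _ n ih =>
    intro k
    cases k with
    | zero => simp [cnt_zero]
    | succ j =>
      by_cases hn : n ≤ 2 * (j + 1)
      · rw [cnt_small n (j + 1) (by omega) hn, eq_comm]
        exact Nat.choose_eq_zero_of_lt (by omega)
      · push_neg at hn
        obtain ⟨m, rfl⟩ : ∃ m, n = m + 3 := ⟨n - 3, by omega⟩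
        rw [cnt_rec m j, ih (m + 2) (by omega) (j + 1), ih (m + 1) (by omega) j]
        have hjm : j ≤ m := by omega
        have h1 : m + 3 - 1 - (j + 1) = (m - j) + 1 := by omega
        have h2 : m + 2 - 1 - (j + 1) = m - j := by omega
        have h3 : m + 1 - 1 - j = m - j := by omega
        rw [h1, h2, h3, Nat.choose_succ_succ']
        exact Nat.add_comm _ _

lemma card_key (n k : ℕ) :
    Nat.card {w : Fin n → Bool //
        RunConstrained (List.ofFn w) ∧ (List.ofFn w).count true = k} =
      (n - 1 - k).choose k := by
  rw [Nat.card_congr (tupEquiv n (fun l => RunConstrained l ∧ l.count true = k))]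
  exact cnt_formula n k

end QAux

open MvPolynomial in
/-- Substituting `q = 1` into `Q_n(x,q)` yields `Σ_{k=0}^{⌊n/2⌋} C(n-1-k,k) xᵏ`
for `n ≥ 2`; that is, the number of run-constrained binary strings of length
`n` with exactly `k` ones equals `C(n-1-k, k)`. -/
theorem Q_at_q_eq_one (n : ℕ) (hn : 2 ≤ n) :
    (MvPolynomial.aeval fun i : Fin 2 =>
        if i = 0 then (Polynomial.X : Polynomial ℤ) else 1) (Q n) =
      ∑ k ∈ Finset.range (n / 2 + 1),
        ((n - 1 - k).choose k : Polynomial ℤ) * Polynomial.X ^ k ∧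
    ∀ k ≤ n / 2,
      Nat.card {w : Fin n → Bool //
          RunConstrained (List.ofFn w) ∧ (List.ofFn w).count true = k} =
        (n - 1 - k).choose k := by
  constructor
  · rw [Q, map_sum]
    have hterm : ∀ w : RC n,
        (MvPolynomial.aeval fun i : Fin 2 =>
            if i = 0 then (Polynomial.X : Polynomial ℤ) else 1)
          ((X 0 : MvPolynomial (Fin 2) ℤ) ^ (List.ofFn w.1).count true * X 1 ^ inv w.1)
        = Polynomial.X ^ (List.ofFn w.1).count true := by
      intro w
      simp
    rw [Finset.sum_congr rfl fun w _ => hterm w]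
    have hmaps : ∀ w : RC n, w ∈ Finset.univ →
        (List.ofFn w.1).count true ∈ Finset.range (n / 2 + 1) := by
      intro w _
      rcases QAux.rc_count_lt w.2 with h | h
      · rw [List.length_ofFn] at h
        exact Finset.mem_range.2 (by omega)
      · exact Finset.mem_range.2 (by omega)
    rw [← Finset.sum_fiberwise_of_maps_to hmaps
      (fun w : RC n => Polynomial.X ^ (List.ofFn w.1).count true)]
    refine Finset.sum_congr rfl fun k hk => ?_
    have hinner : ∀ w ∈ Finset.univ.filter
        (fun w : RC n => (List.ofFn w.1).count true = k),
        Polynomial.X ^ (List.ofFn w.1).count true = (Polynomial.X : Polynomial ℤ) ^ k := by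
      intro w hw
      rw [(Finset.mem_filter.1 hw).2]
    rw [Finset.sum_congr rfl hinner, Finset.sum_const, nsmul_eq_mul]
    congr 1
    have hcard : (Finset.univ.filter
        (fun w : RC n => (List.ofFn w.1).count true = k)).card
        = (n - 1 - k).choose k := by
      rw [← Fintype.card_subtype, ← Nat.card_eq_fintype_card, ← QAux.card_key n k]
      exact Nat.card_congr (Equiv.subtypeSubtypeEquivSubtypeInter
        (fun w : Fin n → Bool => RunConstrained (List.ofFn w))
        (fun w => (List.ofFn w).count true = k))
    rw [hcard]
  · intro k _
    exact QAux.card_key n k
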